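/- Let n ≥ 5 and t ∈ {2, 3}, let R_(n,t) be the (n,t)-regular graph of order n (in which every vertex has degree n − t), and let c be a locating rainbow k-coloring of R_(n,t) with k ≥ 3. Then for every color w, the number of vertices v with d(v, R_w) = 2 is at most t − 1. -/

import Mathlib

namespace LocatingRainbow

open SimpleGraph

variable {V : Type*}

/-- The internal vertices of a walk: its support without the endpoints. -/
def internalVertices {G : SimpleGraph V} {u v : V} (p : G.Walk u v) : List V :=
  p.support.tail.dropLast

/-- `c` is a rainbow vertex coloring of `G` (with colors in `Fin k`) if any two distinct
vertices are joined by a path whose internal vertices have pairwise distinct colors. -/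
def IsRainbowVertexColoring (G : SimpleGraph V) {k : ℕ} (c : V → Fin k) : Prop :=
  ∀ u v : V, u ≠ v → ∃ p : G.Walk u v, p.IsPath ∧ ((internalVertices p).map c).Nodup

/-- The distance from a vertex `v` to the color class of the color `i`. -/
noncomputable def distToColor (G : SimpleGraph V) {k : ℕ} (c : V → Fin k) (v : V) (i : Fin k) :
    ℕ :=
  sInf {m | ∃ y, c y = i ∧ G.dist v y = m}

/-- The rainbow code of a vertex `v`: the vector of distances to all color classes. -/
noncomputable def rainbowCode (G : SimpleGraph V) {k : ℕ} (c : V → Fin k) (v : V) :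
    Fin k → ℕ :=
  fun i => distToColor G c v i

/-- `c` is a locating rainbow coloring if it is a rainbow vertex coloring and distinct
vertices have distinct rainbow codes. -/
def IsLocatingRainbowColoring (G : SimpleGraph V) {k : ℕ} (c : V → Fin k) : Prop :=
  IsRainbowVertexColoring G c ∧ Function.Injective (rainbowCode G c)

/-- The rainbow vertex connection number of `G`. -/
noncomputable def rvc (G : SimpleGraph V) : ℕ :=
  sInf {k | ∃ c : V → Fin k, IsRainbowVertexColoring G c}

/-- The locating rainbow connection number of `G`. -/
noncomputable def rvcl (G : SimpleGraph V) : ℕ :=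
  sInf {k | ∃ c : V → Fin k, IsLocatingRainbowColoring G c}

end LocatingRainbow

namespace LocatingRainbow

open SimpleGraph

/-- The `(n,2)`-regular graph (for even `n`): the complete graph on `Fin n` with the
perfect matching `{vᵢ v_{i+n/2}}` (indices mod `n`) removed; every vertex has degree
`n - 2`. -/
def Rn2 (n : ℕ) : SimpleGraph (Fin n) where
  Adj i j := i ≠ j ∧ (i.val + n / 2) % n ≠ j.val ∧ (j.val + n / 2) % n ≠ i.val
  symm := ⟨fun _ _ ⟨h1, h2, h3⟩ => ⟨h1.symm, h3, h2⟩⟩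
  loopless := ⟨fun _ h => h.1 rfl⟩

/-- The `(n,3)`-regular graph: the complement of the cycle `C_n`, i.e. the complete graph
with the edges of a Hamiltonian cycle removed; every vertex has degree `n - 3`. -/
def Rn3 (n : ℕ) : SimpleGraph (Fin n) := (cycleGraph n)ᶜ

/-- The `(n,t)`-regular graph for `t ∈ {2, 3}`. -/
def Rnt (n t : ℕ) : SimpleGraph (Fin n) := if t = 2 then Rn2 n else Rn3 n

end LocatingRainbow

open LocatingRainbow in
/-- For `n ≥ 5`, `t ∈ {2,3}` (with `n` even in case `t = 2`), and a locating rainbow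
`k`-coloring `c` of the `(n,t)`-regular graph with `k ≥ 3`, for every color `w` the
number of vertices `v` with `d(v, R_w) = 2` is at most `t - 1`. -/
theorem card_distToColor_eq_two_le {n t k : ℕ} (hn : 5 ≤ n) (ht : t = 2 ∨ t = 3)
    (hpar : t = 2 → Even n) (hk : 3 ≤ k) (c : Fin n → Fin k)
    (hc : IsLocatingRainbowColoring (Rnt n t) c) (w : Fin k) :
    {v : Fin n | distToColor (Rnt n t) c v w = 2}.ncard ≤ t - 1 := by

  rcases Set.eq_empty_or_nonempty {v : Fin n | distToColor (Rnt n t) c v w = 2} with hS | ⟨v0, hv0⟩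
  · simp [hS]
  -- there is a vertex of color w
  have hin : distToColor (Rnt n t) c v0 w = 2 := hv0
  have hne : {m | ∃ y, c y = w ∧ (Rnt n t).dist v0 y = m}.Nonempty := by
    by_contra h
    rw [Set.not_nonempty_iff_eq_empty] at h
    rw [distToColor, h, Nat.sInf_empty] at hin
    exact absurd hin (by norm_num)
  obtain ⟨m0, y0, hy0, -⟩ := hne
  -- every vertex in the set is non-adjacent to y0 and distinct from y0
  have key : ∀ v, distToColor (Rnt n t) c v w = 2 → v ≠ y0 ∧ ¬ (Rnt n t).Adj v y0 := by
    intro v hv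
    have h2 : 2 ≤ (Rnt n t).dist v y0 := by
      have := Nat.sInf_le (s := {m | ∃ y, c y = w ∧ (Rnt n t).dist v y = m}) ⟨y0, hy0, rfl⟩
      rw [distToColor] at hv
      omega
    constructor
    · rintro rfl
      rw [SimpleGraph.dist_self] at h2; omega
    · intro hadj
      rw [← SimpleGraph.dist_eq_one_iff_adj] at hadj
      omega
  rcases ht with rfl | rfl
  · -- t = 2 : the set is a subset of the singleton {antipode y0}
    have hev := hpar rfl
    have hhalf : n / 2 + n / 2 = n := by
      obtain ⟨m, rfl⟩ := hev; omega
    have hdet : ∀ v : Fin n, distToColor (Rnt n 2) c v w = 2 →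
        (v : ℕ) = ((y0 : ℕ) + n / 2) % n := by
      intro v hv
      obtain ⟨hvne, hnadj⟩ := key v hv
      have : ¬ ((v : Fin n) ≠ y0 ∧ ((v : ℕ) + n / 2) % n ≠ (y0 : ℕ) ∧
          ((y0 : ℕ) + n / 2) % n ≠ (v : ℕ)) := by
        intro h
        exact hnadj (by simpa [Rnt, Rn2] using h)
      push_neg at this
      rcases Classical.em ((((v : ℕ)) + n / 2) % n = (y0 : ℕ)) with h1 | h1
      · -- v + n/2 ≡ y0, so v ≡ y0 + n/2
        have hv2 : (v : ℕ) < n := v.isLt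
        have : (((v : ℕ) + n / 2) % n + n / 2) % n = ((y0 : ℕ) + n / 2) % n := by rw [h1]
        rwa [Nat.mod_add_mod, Nat.add_assoc, hhalf, Nat.add_mod_right,
          Nat.mod_eq_of_lt hv2] at this
      · exact ((this hvne) h1).symm
    have hsub : {v : Fin n | distToColor (Rnt n 2) c v w = 2} ⊆
        {(⟨((y0 : ℕ) + n / 2) % n, Nat.mod_lt _ (by omega)⟩ : Fin n)} := by
      intro v hv
      exact Fin.ext (hdet v hv)
    calc {v : Fin n | distToColor (Rnt n 2) c v w = 2}.ncard
        ≤ ({(⟨((y0 : ℕ) + n / 2) % n, Nat.mod_lt _ (by omega)⟩ : Fin n)} : Set (Fin n)).ncard :=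
          Set.ncard_le_ncard hsub (Set.finite_singleton _)
      _ = 1 := Set.ncard_singleton _
  · -- t = 3 : the set is a subset of {y0 - 1, y0 + 1}
    obtain ⟨m, rfl⟩ : ∃ m, n = m + 2 := ⟨n - 2, by omega⟩
    have hsub : {v : Fin (m + 2) | distToColor (Rnt (m + 2) 3) c v w = 2} ⊆
        {y0 + 1, y0 - 1} := by
      intro v hv
      obtain ⟨hvne, hnadj⟩ := key v hv
      have hadj : (SimpleGraph.cycleGraph (m + 2)).Adj v y0 := by
        by_contra h
        exact hnadj (by simp [Rnt, Rn3, SimpleGraph.compl_adj, hvne, h])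
      rw [SimpleGraph.cycleGraph_adj] at hadj
      rcases hadj with h | h
      · left
        rw [sub_eq_iff_eq_add] at h
        exact h.trans (add_comm _ _)
      · right
        rw [sub_eq_iff_eq_add] at h
        exact eq_sub_iff_add_eq.mpr ((add_comm v 1).trans h.symm)
    calc {v : Fin (m + 2) | distToColor (Rnt (m + 2) 3) c v w = 2}.ncard
        ≤ ({y0 + 1, y0 - 1} : Set (Fin (m + 2))).ncard :=
          Set.ncard_le_ncard hsub (Set.toFinite _)
      _ ≤ 2 := by
          refine le_trans (Set.ncard_insert_le _ _) ?_
          simp
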